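/- Let k be an algebraically closed field of characteristic 0 and let f ∈ k[x₁,...,xₙ] be an irreducible homogeneous polynomial of degree d ≥ 2. Suppose A₁,...,Aₙ are m×m matrices over k satisfying (x₁A₁ + ⋯ + xₙAₙ)^d = f(x₁,...,xₙ)·I_m in Mat_m(k[x₁,...,xₙ]). Then d divides m. -/

import Mathlib

/-!
STATEMENT 0: Let `k` be an algebraically closed field of characteristic 0 and
`f ∈ k[x₁,...,xₙ]` an irreducible homogeneous polynomial of degree `d ≥ 2`.
If `A₁,...,Aₙ` are `m × m` matrices over `k` with
`(x₁A₁ + ⋯ + xₙAₙ)^d = f · I_m` in `Mat_m(k[x₁,...,xₙ])`, then `d ∣ m`.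
-/

open MvPolynomial

theorem dim_of_clifford_representation_divisible_by_deg
    (k : Type) [Field k] [IsAlgClosed k] [CharZero k]
    (n d m : ℕ) (hd : 2 ≤ d)
    (f : MvPolynomial (Fin n) k)
    (hf_irr : Irreducible f) (hf_hom : f.IsHomogeneous d)
    (A : Fin n → Matrix (Fin m) (Fin m) k)
    (hrep : (∑ i : Fin n, (X i : MvPolynomial (Fin n) k) •
        (A i).map (C : k →+* MvPolynomial (Fin n) k)) ^ d
      = f • (1 : Matrix (Fin m) (Fin m) (MvPolynomial (Fin n) k))) :
    d ∣ m := by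
  set L := ∑ i : Fin n, (X i : MvPolynomial (Fin n) k) •
      (A i).map (C : k →+* MvPolynomial (Fin n) k) with hL
  have hdet := congrArg Matrix.det hrep
  rw [Matrix.det_pow, Matrix.det_smul, Matrix.det_one, mul_one] at hdet
  simp only [Fintype.card_fin] at hdet
  set g : MvPolynomial (Fin n) k := L.det with hg
  have hp : Prime f := hf_irr.prime
  have hg0 : g ≠ 0 := by
    intro h
    apply pow_ne_zero m hp.ne_zero
    rw [← hdet, h, zero_pow (by omega)]
  have hfin : FiniteMultiplicity f g :=
    FiniteMultiplicity.of_not_isUnit hp.not_unit hg0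
  have h1 : emultiplicity f (g ^ d) = d * emultiplicity f g := emultiplicity_pow hp
  rw [hdet, emultiplicity_pow_self_of_prime hp, hfin.emultiplicity_eq_multiplicity] at h1
  have h2 : (m : ℕ∞) = ((d * multiplicity f g : ℕ) : ℕ∞) := by
    rw [h1]; push_cast; ring
  exact ⟨multiplicity f g, Nat.cast_injective h2⟩
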